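/- arXiv:2402.05074 — 2 statements merged into one kernel-verified Lean document; each statement's English description precedes it below -/
import Mathlib

section
/- (Intermediate inequality Eq. (11) in the proof of Theorem 3.) Let d ≥ 1, let ρ₁, ρ₂ be density matrices on ℂ^d, let p₁, p₂ ≥ 0 with p₁ + p₂ = 1, let R ≥ 0, and define σᵢ := (1+R)⁻¹ · (ρᵢ + (R/d) · I) for i = 1, 2. Then ‖p₁·ρ₁ − p₂·ρ₂‖₁ − ‖p₁·σ₁ − p₂·σ₂‖₁ ≥ (R/(1+R)) · (‖p₁·ρ₁ − p₂·ρ₂‖₁ − |p₁ − p₂|). -/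
open Matrix
open scoped ComplexOrder

/-- A density matrix: positive semidefinite with unit trace. -/
def IsDensityMatrix {n : Type*} [Fintype n] [DecidableEq n] (ρ : Matrix n n ℂ) : Prop :=
  ρ.PosSemidef ∧ ρ.trace = 1

/-- The positive semidefinite square root, as `Matrix.PosSemidef.sqrt` was defined in the older
Mathlib (removed since). -/
noncomputable def Matrix.PosSemidef.sqrt {n : Type*} [Fintype n] [DecidableEq n]
    {A : Matrix n n ℂ} (hA : A.PosSemidef) : Matrix n n ℂ :=
  (hA.1.eigenvectorUnitary : Matrix n n ℂ) *
    diagonal (fun i => ((Real.sqrt (hA.1.eigenvalues i) : ℝ) : ℂ)) *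
    (star hA.1.eigenvectorUnitary : Matrix n n ℂ)

/-- The trace norm of a complex matrix: the trace of the positive semidefinite
square root of `Aᴴ * A`. -/
noncomputable def traceNorm {n : Type*} [Fintype n] [DecidableEq n]
    (A : Matrix n n ℂ) : ℝ :=
  ((Matrix.posSemidef_conjTranspose_mul_self A).sqrt.trace).re

open scoped MatrixOrder in
lemma posSemidef_eq_sqrt_of_sq_eq {n : Type*} [Fintype n] [DecidableEq n]
    {A S : Matrix n n ℂ} (hA : A.PosSemidef) (hS : S.PosSemidef) (h : S ^ 2 = A) :
    S = hA.sqrt := by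
  have e1 : hA.sqrt = cfc Real.sqrt A := by
    rw [hA.1.cfc_eq]
    simp [IsHermitian.cfc, Matrix.PosSemidef.sqrt, Function.comp_def]
  rw [e1, ← cfcₙ_eq_cfc, ← CFC.sqrt_eq_real_sqrt A hA.nonneg]
  exact (CFC.sqrt_unique (b := S) (by rw [← h, sq]) hS.nonneg).symm

lemma traceNorm_unitary_diag {d : ℕ} (U : Matrix (Fin d) (Fin d) ℂ)
    (hU : U ∈ Matrix.unitaryGroup (Fin d) ℂ) (f : Fin d → ℝ) :
    traceNorm (U * Matrix.diagonal (fun i => (f i : ℂ)) * Uᴴ) = ∑ i, |f i| := by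
  have hUU : U * Uᴴ = 1 := by
    simpa [Matrix.star_eq_conjTranspose] using (Matrix.mem_unitaryGroup_iff.mp hU)
  have hUU' : Uᴴ * U = 1 := by
    simpa [Matrix.star_eq_conjTranspose] using (Matrix.mem_unitaryGroup_iff'.mp hU)
  set A := U * Matrix.diagonal (fun i => (f i : ℂ)) * Uᴴ with hA
  set S := U * Matrix.diagonal (fun i => ((|f i| : ℝ) : ℂ)) * Uᴴ with hS
  have hSps : S.PosSemidef := by
    refine Matrix.PosSemidef.mul_mul_conjTranspose_same ?_ U
    refine Matrix.posSemidef_diagonal_iff.mpr fun i => ?_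
    exact_mod_cast abs_nonneg (f i)
  have hAH : Aᴴ = A := by
    simp [hA, Matrix.conjTranspose_mul, Matrix.diagonal_conjTranspose, mul_assoc]
    congr 1
    ext i j
    by_cases h : i = j <;> simp [Matrix.diagonal, h]
  have hsq : S ^ 2 = Aᴴ * A := by
    rw [hAH, pow_two, hA, hS]
    calc U * Matrix.diagonal (fun i => ((|f i| : ℝ) : ℂ)) * Uᴴ *
          (U * Matrix.diagonal (fun i => ((|f i| : ℝ) : ℂ)) * Uᴴ)
        = U * (Matrix.diagonal (fun i => ((|f i| : ℝ) : ℂ)) * (Uᴴ * U) *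
            Matrix.diagonal (fun i => ((|f i| : ℝ) : ℂ))) * Uᴴ := by
          simp only [mul_assoc]
      _ = U * (Matrix.diagonal (fun i => (f i : ℂ)) * (Uᴴ * U) *
            Matrix.diagonal (fun i => (f i : ℂ))) * Uᴴ := by
          rw [hUU']
          simp only [mul_one, Matrix.diagonal_mul_diagonal]
          have hff : (fun i => ((|f i| : ℝ) : ℂ) * ((|f i| : ℝ) : ℂ)) =
              fun i => ((f i : ℝ) : ℂ) * ((f i : ℝ) : ℂ) := by
            funext i
            norm_cast
            exact abs_mul_abs_self _
          rw [hff]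
      _ = U * Matrix.diagonal (fun i => (f i : ℂ)) * Uᴴ *
            (U * Matrix.diagonal (fun i => (f i : ℂ)) * Uᴴ) := by
          simp only [mul_assoc]
  have hsqrt : S = (Matrix.posSemidef_conjTranspose_mul_self A).sqrt :=
    posSemidef_eq_sqrt_of_sq_eq _ hSps hsq
  have htr : S.trace = ∑ i, ((|f i| : ℝ) : ℂ) := by
    rw [hS, Matrix.trace_mul_comm, ← mul_assoc, hUU', one_mul,
      Matrix.trace_diagonal]
  rw [traceNorm, ← hsqrt, htr, ← Complex.ofReal_sum]
  exact Complex.ofReal_re _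

set_option maxHeartbeats 1000000 in
theorem stmt7 {d : ℕ} (hd : 1 ≤ d)
    (ρ₁ ρ₂ : Matrix (Fin d) (Fin d) ℂ)
    (hρ₁ : IsDensityMatrix ρ₁) (hρ₂ : IsDensityMatrix ρ₂)
    (p₁ p₂ : ℝ) (hp₁ : 0 ≤ p₁) (hp₂ : 0 ≤ p₂) (hp : p₁ + p₂ = 1)
    (R : ℝ) (hR : 0 ≤ R)
    (σ₁ σ₂ : Matrix (Fin d) (Fin d) ℂ)
    (hσ₁ : σ₁ = ((1 + R)⁻¹ : ℝ) • (ρ₁ + ((R / d : ℝ)) • (1 : Matrix (Fin d) (Fin d) ℂ)))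
    (hσ₂ : σ₂ = ((1 + R)⁻¹ : ℝ) • (ρ₂ + ((R / d : ℝ)) • (1 : Matrix (Fin d) (Fin d) ℂ))) :
    traceNorm (p₁ • ρ₁ - p₂ • ρ₂) - traceNorm (p₁ • σ₁ - p₂ • σ₂) ≥
      (R / (1 + R)) * (traceNorm (p₁ • ρ₁ - p₂ • ρ₂) - |p₁ - p₂|) := by
  have hd0 : (0:ℝ) < d := by exact_mod_cast hd
  set X := p₁ • ρ₁ - p₂ • ρ₂ with hX
  have hXH : X.IsHermitian := by
    have h1 := hρ₁.1.1
    have h2 := hρ₂.1.1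
    unfold Matrix.IsHermitian at *
    rw [hX, Matrix.conjTranspose_sub, Matrix.conjTranspose_smul, Matrix.conjTranspose_smul,
      h1, h2, star_trivial, star_trivial]
  set lam := hXH.eigenvalues with hlam
  obtain ⟨U, hU, hspec⟩ : ∃ U ∈ Matrix.unitaryGroup (Fin d) ℂ,
      X = U * Matrix.diagonal (fun i => (lam i : ℂ)) * Uᴴ := by
    refine ⟨hXH.eigenvectorUnitary, hXH.eigenvectorUnitary.2, ?_⟩
    rw [← Matrix.star_eq_conjTranspose]
    exact hXH.spectral_theorem
  set c : ℝ := (R / d) * (p₁ - p₂) with hc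
  -- the key algebraic identity
  have hkey : p₁ • σ₁ - p₂ • σ₂ =
      U * Matrix.diagonal (fun i => ((((1 + R)⁻¹ * (lam i + c) : ℝ)) : ℂ)) * Uᴴ := by
    have hdiag : Matrix.diagonal (fun i => ((((1 + R)⁻¹ * (lam i + c) : ℝ)) : ℂ)) =
        ((1 + R)⁻¹ : ℝ) • (Matrix.diagonal (fun i => (lam i : ℂ)) + (c : ℂ) • 1) := by
      ext i j
      by_cases h : i = j <;> simp [Matrix.diagonal, h, Matrix.one_apply, Complex.real_smul] <;> push_cast <;> ring
    rw [hdiag]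
    have hmid : U * (((1 + R)⁻¹ : ℝ) • (Matrix.diagonal (fun i => (lam i : ℂ)) + (c : ℂ) • 1)) * Uᴴ
        = ((1 + R)⁻¹ : ℝ) • (X + (c : ℂ) • 1) := by
      rw [Matrix.mul_smul, Matrix.smul_mul]
      congr 1
      rw [Matrix.mul_add, Matrix.add_mul, ← hspec]
      congr 1
      rw [Matrix.mul_smul, Matrix.smul_mul, mul_one]
      have : U * Uᴴ = 1 := by
        simpa [Matrix.star_eq_conjTranspose] using (Matrix.mem_unitaryGroup_iff.mp hU)
      rw [this]
    rw [hmid, hσ₁, hσ₂, hX]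
    ext i j
    simp only [Matrix.sub_apply, Matrix.add_apply, Matrix.smul_apply, Complex.real_smul,
      Matrix.one_apply]
    by_cases h : i = j <;> simp [h, hc] <;> push_cast <;> ring
  have hT : traceNorm X = ∑ i, |lam i| := by
    rw [hspec]; exact traceNorm_unitary_diag U hU lam
  have hN : traceNorm (p₁ • σ₁ - p₂ • σ₂) = ∑ i, |(1 + R)⁻¹ * (lam i + c)| := by
    rw [hkey]; exact traceNorm_unitary_diag U hU _
  have hR1 : (0:ℝ) < 1 + R := by linarith
  have hbound : traceNorm (p₁ • σ₁ - p₂ • σ₂) ≤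
      (1 + R)⁻¹ * (traceNorm X + R * |p₁ - p₂|) := by
    rw [hN, hT]
    have h1 : ∀ i, |(1 + R)⁻¹ * (lam i + c)| ≤ (1 + R)⁻¹ * (|lam i| + |c|) := by
      intro i
      rw [abs_mul, abs_of_pos (inv_pos.mpr hR1)]
      exact mul_le_mul_of_nonneg_left (abs_add_le _ _) (inv_pos.mpr hR1).le
    calc ∑ i, |(1 + R)⁻¹ * (lam i + c)| ≤ ∑ i, (1 + R)⁻¹ * (|lam i| + |c|) :=
          Finset.sum_le_sum fun i _ => h1 i
      _ = (1 + R)⁻¹ * (∑ i, |lam i| + d * |c|) := by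
          simp only [mul_add]
          rw [Finset.sum_add_distrib, ← Finset.mul_sum, Finset.sum_const, Finset.card_univ,
            Fintype.card_fin, nsmul_eq_mul]
          ring
      _ = (1 + R)⁻¹ * (∑ i, |lam i| + R * |p₁ - p₂|) := by
          congr 2
          rw [hc, abs_mul, abs_of_nonneg (by positivity : (0:ℝ) ≤ R / d)]
          field_simp
    -- done
  have hid : traceNorm X - (1 + R)⁻¹ * (traceNorm X + R * |p₁ - p₂|) =
      (R / (1 + R)) * (traceNorm X - |p₁ - p₂|) := by
    field_simp
    ring
  rw [ge_iff_le, ← hid]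
  linarith
end

section
/- (Random robustness of entanglement of a Bell state equals 2.) In ℂ²⊗ℂ² (matrices indexed by Fin 2 × Fin 2), let ρ = |φ⁺⟩⟨φ⁺| be the projector onto the Bell state |φ⁺⟩ = (|00⟩+|11⟩)/√2, and for r ≥ 0 define σ(r) := (1+r)⁻¹ · (ρ + (r/4) · I). Then σ(2) = (ρ + I/2)/3 is separable, while for every r with 0 ≤ r < 2 the matrix σ(r) is not separable; consequently sInf { r : ℝ | r ≥ 0 ∧ σ(r) is separable } = 2. -/
open Matrix
open scoped ComplexOrder Kronecker

/-- A two-qubit state is separable if it is a convex combination of product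
density matrices. -/
def IsSepState (ρ : Matrix (Fin 2 × Fin 2) (Fin 2 × Fin 2) ℂ) : Prop :=
  ρ ∈ convexHull ℝ { X | ∃ A : Matrix (Fin 2) (Fin 2) ℂ, ∃ C : Matrix (Fin 2) (Fin 2) ℂ,
    IsDensityMatrix A ∧ IsDensityMatrix C ∧ X = A ⊗ₖ C }

/-- The Bell state `|φ⁺⟩ = (|00⟩ + |11⟩)/√2` as a vector in `ℂ² ⊗ ℂ²`. -/
noncomputable def phiPlus : Fin 2 × Fin 2 → ℂ := fun x =>
  if x = (0, 0) then (Real.sqrt 2)⁻¹ else if x = (1, 1) then (Real.sqrt 2)⁻¹ else 0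

/-! ### Auxiliary lemmas -/

lemma psd_vecMulVec {n : Type*} [Fintype n] (v : n → ℂ) :
    (vecMulVec v (star v)).PosSemidef := by
  rw [posSemidef_iff_dotProduct_mulVec]
  constructor
  · ext i j
    simp [conjTranspose_apply, vecMulVec_apply, mul_comm]
  · intro x
    have h : star x ⬝ᵥ (vecMulVec v (star v)) *ᵥ x
        = star (star v ⬝ᵥ x) * (star v ⬝ᵥ x) := by
      simp only [dotProduct, mulVec, vecMulVec_apply, Pi.star_apply, star_sum, star_mul',
        star_star, Finset.mul_sum, Finset.sum_mul]
      rw [Finset.sum_comm]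
      refine Finset.sum_congr rfl fun i _ => Finset.sum_congr rfl fun j _ => by ring
    rw [h]
    exact star_mul_self_nonneg _

lemma conjTranspose_kron (A B : Matrix (Fin 2) (Fin 2) ℂ) :
    (A ⊗ₖ B)ᴴ = Aᴴ ⊗ₖ Bᴴ := by
  ext i j
  simp [conjTranspose_apply, kroneckerMap_apply]

lemma psd_kron {A B : Matrix (Fin 2) (Fin 2) ℂ} (hA : A.PosSemidef) (hB : B.PosSemidef) :
    (A ⊗ₖ B).PosSemidef := by
  exact hA.kronecker hB

noncomputable def c2 : ℂ := ((Real.sqrt 2 : ℂ))⁻¹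

lemma c2_sq : c2 ^ 2 = 1 / 2 := by
  rw [c2, inv_pow, ← Complex.ofReal_pow, Real.sq_sqrt (by norm_num : (0:ℝ) ≤ 2)]
  norm_num

lemma c2_quad : c2 ^ 4 = 1 / 4 := by
  have h : c2 ^ 4 = (c2 ^ 2) ^ 2 := by ring
  rw [h, c2_sq]; norm_num

lemma star_c2 : star c2 = c2 := by
  simp [c2, star_inv₀, Complex.star_def, Complex.conj_ofReal]

lemma conj_c2 : (starRingEnd ℂ) c2 = c2 := star_c2

lemma sqrt2_inv_sq : ((Real.sqrt 2 : ℂ))⁻¹ * ((Real.sqrt 2 : ℂ))⁻¹ = 1 / 2 := by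
  have h := c2_sq; rw [c2, sq] at h; exact h

lemma rho_apply (x y : Fin 2 × Fin 2) :
    vecMulVec phiPlus (star phiPlus) x y =
      if (x = (0,0) ∨ x = (1,1)) ∧ (y = (0,0) ∨ y = (1,1)) then (1/2 : ℂ) else 0 := by
  have star_sqrt2_inv : star (((Real.sqrt 2 : ℂ))⁻¹) = ((Real.sqrt 2 : ℂ))⁻¹ := star_c2
  simp only [vecMulVec_apply, Pi.star_apply, phiPlus]
  split_ifs <;> simp_all [star_sqrt2_inv, sqrt2_inv_sq]

/-- The entanglement-witness functional (a quadratic form of the partial transpose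
tested against the singlet-like vector `|01⟩ - |10⟩`). -/
noncomputable def gLin : Matrix (Fin 2 × Fin 2) (Fin 2 × Fin 2) ℂ →ₗ[ℝ] ℝ where
  toFun M := (M (0,1) (0,1) + M (1,0) (1,0) - M (0,0) (1,1) - M (1,1) (0,0)).re
  map_add' M N := by simp [Matrix.add_apply]; ring
  map_smul' c M := by simp [Matrix.smul_apply, Complex.smul_re]; ring

lemma gLin_apply (M : Matrix (Fin 2 × Fin 2) (Fin 2 × Fin 2) ℂ) :
    gLin M = (M (0,1) (0,1) + M (1,0) (1,0) - M (0,0) (1,1) - M (1,1) (0,0)).re := rfl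

lemma gLin_nonneg_of_mem {X : Matrix (Fin 2 × Fin 2) (Fin 2 × Fin 2) ℂ}
    (hX : X ∈ { X | ∃ A : Matrix (Fin 2) (Fin 2) ℂ, ∃ C : Matrix (Fin 2) (Fin 2) ℂ,
      IsDensityMatrix A ∧ IsDensityMatrix C ∧ X = A ⊗ₖ C }) : 0 ≤ gLin X := by
  obtain ⟨A, C, hA, hC, rfl⟩ := hX
  have hN : (A ⊗ₖ Cᵀ).PosSemidef := psd_kron hA.1 hC.1.transpose
  set w : Fin 2 × Fin 2 → ℂ := fun p => if p = (0,1) then 1 else if p = (1,0) then -1 else 0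
    with hw
  have hq := hN.dotProduct_mulVec_nonneg w
  have hcalc : star w ⬝ᵥ (A ⊗ₖ Cᵀ) *ᵥ w
      = A 0 0 * C 1 1 + A 1 1 * C 0 0 - A 0 1 * C 0 1 - A 1 0 * C 1 0 := by
    simp [dotProduct, mulVec, Fintype.sum_prod_type, Fin.sum_univ_two, hw,
      kroneckerMap_apply, transpose_apply, Prod.ext_iff]
    try ring
  have hre : 0 ≤ (star w ⬝ᵥ (A ⊗ₖ Cᵀ) *ᵥ w).re := by
    have h := (Complex.le_def.mp hq).1
    simpa using h
  rw [hcalc] at hre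
  have hg : gLin (A ⊗ₖ C)
      = (A 0 0 * C 1 1 + A 1 1 * C 0 0 - A 0 1 * C 0 1 - A 1 0 * C 1 0).re := by
    simp [gLin_apply, kroneckerMap_apply]
    try ring_nf
  rw [hg]
  exact hre

/-! ### The explicit separable decomposition of `(ρ + I/2)/3` -/

noncomputable def uVec : Fin 6 → Fin 2 → ℂ
  | 0 => ![1, 0]
  | 1 => ![0, 1]
  | 2 => ![c2, c2]
  | 3 => ![c2, -c2]
  | 4 => ![c2, c2 * Complex.I]
  | 5 => ![c2, -(c2 * Complex.I)]

noncomputable def AMat (k : Fin 6) : Matrix (Fin 2) (Fin 2) ℂ :=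
  vecMulVec (uVec k) (star (uVec k))
noncomputable def CMat (k : Fin 6) : Matrix (Fin 2) (Fin 2) ℂ :=
  vecMulVec (star (uVec k)) (uVec k)

lemma AMat_density (k : Fin 6) : IsDensityMatrix (AMat k) := by
  refine ⟨psd_vecMulVec _, ?_⟩
  fin_cases k
  all_goals simp [AMat, uVec, Matrix.trace, Matrix.diag, vecMulVec_apply, Fin.sum_univ_two,
    star_c2, conj_c2, Complex.star_def, _root_.map_mul, Complex.conj_I]
  all_goals try ring_nf
  all_goals simp [c2_sq, c2_quad, Complex.I_sq]
  all_goals try norm_num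

lemma CMat_density (k : Fin 6) : IsDensityMatrix (CMat k) := by
  refine ⟨by simpa [star_star, CMat] using psd_vecMulVec (star (uVec k)), ?_⟩
  fin_cases k
  all_goals simp [CMat, uVec, Matrix.trace, Matrix.diag, vecMulVec_apply, Fin.sum_univ_two,
    star_c2, conj_c2, Complex.star_def, _root_.map_mul, Complex.conj_I]
  all_goals try ring_nf
  all_goals simp [c2_sq, c2_quad, Complex.I_sq]
  all_goals try norm_num

set_option maxHeartbeats 2000000 in
lemma sep_decomp :
    ((3:ℝ)⁻¹) • (vecMulVec phiPlus (star phiPlus)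
        + ((2:ℝ)⁻¹) • (1 : Matrix (Fin 2 × Fin 2) (Fin 2 × Fin 2) ℂ))
      = ∑ k : Fin 6, (6⁻¹ : ℝ) • (AMat k ⊗ₖ CMat k) := by
  ext x y
  simp only [Matrix.sum_apply, Matrix.smul_apply, Matrix.add_apply, Matrix.one_apply, rho_apply]
  simp only [AMat, CMat, kroneckerMap_apply, vecMulVec_apply, Pi.star_apply, Fin.sum_univ_six]
  fin_cases x <;> fin_cases y
  all_goals try simp [uVec, star_c2, conj_c2, Complex.real_smul, Complex.star_def,
    _root_.map_mul, Complex.conj_I]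
  all_goals try ring_nf
  all_goals try simp [c2_sq, c2_quad, Complex.I_sq]
  all_goals try norm_num
  all_goals decide

theorem stmt10
    (ρ : Matrix (Fin 2 × Fin 2) (Fin 2 × Fin 2) ℂ)
    (hρ : ρ = vecMulVec phiPlus (star phiPlus))
    (σ : ℝ → Matrix (Fin 2 × Fin 2) (Fin 2 × Fin 2) ℂ)
    (hσ : ∀ r : ℝ, σ r = ((1 + r)⁻¹ : ℝ) •
      (ρ + ((r / 4 : ℝ)) • (1 : Matrix (Fin 2 × Fin 2) (Fin 2 × Fin 2) ℂ))) :
    (σ 2 = ((3 : ℝ)⁻¹) • (ρ + ((2 : ℝ)⁻¹) • (1 : Matrix (Fin 2 × Fin 2) (Fin 2 × Fin 2) ℂ)) ∧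
        IsSepState (σ 2)) ∧
      (∀ r : ℝ, 0 ≤ r → r < 2 → ¬ IsSepState (σ r)) ∧
      sInf { r : ℝ | 0 ≤ r ∧ IsSepState (σ r) } = 2 := by
  have h1 : σ 2 = ((3 : ℝ)⁻¹) • (ρ + ((2 : ℝ)⁻¹) •
      (1 : Matrix (Fin 2 × Fin 2) (Fin 2 × Fin 2) ℂ)) := by
    rw [hσ 2]
    norm_num
  have hsep2 : IsSepState (σ 2) := by
    rw [h1, hρ, sep_decomp]
    refine (convex_convexHull ℝ _).sum_mem (fun i _ => by norm_num) ?_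
      (fun i _ => subset_convexHull _ _ ⟨AMat i, CMat i, AMat_density i, CMat_density i, rfl⟩)
    simp
  have hnotsep : ∀ r : ℝ, 0 ≤ r → r < 2 → ¬ IsSepState (σ r) := by
    intro r hr0 hr2 hsep
    have hge : 0 ≤ gLin (σ r) := by
      have hsub : convexHull ℝ { X | ∃ A : Matrix (Fin 2) (Fin 2) ℂ,
          ∃ C : Matrix (Fin 2) (Fin 2) ℂ, IsDensityMatrix A ∧ IsDensityMatrix C ∧ X = A ⊗ₖ C }
          ⊆ {M | 0 ≤ gLin M} :=
        convexHull_min (fun X hX => gLin_nonneg_of_mem hX)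
          (convex_halfSpace_ge gLin.isLinear 0)
      exact hsub hsep
    have hval : gLin (σ r) = (1 + r)⁻¹ * (r / 2 - 1) := by
      rw [hσ r, hρ, gLin_apply]
      simp only [Matrix.smul_apply, Matrix.add_apply, Matrix.one_apply, rho_apply]
      norm_num [Complex.smul_re, Prod.ext_iff]
      have hns : Complex.normSq (1 + (r:ℂ)) = (1+r)^2 := by
        rw [show (1 + (r:ℂ)) = ((1+r:ℝ):ℂ) by push_cast; ring, Complex.normSq_ofReal]
        ring
      rw [hns]
      have h1r : (0:ℝ) < 1 + r := by linarith
      field_simp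
      ring
    rw [hval] at hge
    have h1r : (0:ℝ) < 1 + r := by linarith
    have hneg : (1 + r)⁻¹ * (r / 2 - 1) < 0 :=
      mul_neg_of_pos_of_neg (inv_pos.mpr h1r) (by linarith)
    linarith
  have h2mem : (2:ℝ) ∈ { r : ℝ | 0 ≤ r ∧ IsSepState (σ r) } := ⟨by norm_num, hsep2⟩
  have hlb : ∀ x ∈ { r : ℝ | 0 ≤ r ∧ IsSepState (σ r) }, (2:ℝ) ≤ x := by
    intro x hx
    by_contra h
    push_neg at h
    exact hnotsep x hx.1 h hx.2
  exact ⟨⟨h1, hsep2⟩, hnotsep,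
    le_antisymm (csInf_le ⟨2, hlb⟩ h2mem) (le_csInf ⟨2, h2mem⟩ hlb)⟩
end
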